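/- The number of sublattices of index m in ℤⁿ equals Σ over all factorizations m = d₁d₂⋯d_n of d₁⁰ d₂¹ ⋯ d_n^{n-1}, where the sum runs over ordered n-tuples of positive integers with product m. -/

import Mathlib

open AddSubgroup

section GroupTheory

variable {G : Type*} [AddCommGroup G]



lemma index_eq_mul_aux (H : AddSubgroup (G × ℤ)) :
    H.index = (H.map (AddMonoidHom.snd G ℤ)).index * (H.comap (AddMonoidHom.inl G ℤ)).index := by
  have hker : (AddMonoidHom.snd G ℤ).ker = (AddMonoidHom.inl G ℤ).range := by
    ext ⟨g, k⟩
    constructor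
    · intro h
      have hk : k = 0 := h
      exact ⟨g, by simp [Prod.ext_iff, hk.symm]⟩
    · rintro ⟨g', hg'⟩
      have : k = 0 := by simpa [Prod.ext_iff] using congrArg Prod.snd hg'.symm
      exact this
  have hrange : (AddMonoidHom.snd G ℤ).range = ⊤ :=
    AddMonoidHom.range_eq_top_of_surjective _ (fun k => ⟨(0, k), rfl⟩)
  rw [AddSubgroup.index_map, hrange, AddSubgroup.index_top, mul_one,
    AddSubgroup.index_comap, ← hker]
  rw [← AddSubgroup.relIndex_sup_left (AddMonoidHom.snd G ℤ).ker H]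
  rw [mul_comm]
  exact (AddSubgroup.relIndex_mul_index (le_sup_left : H ≤ H ⊔ (AddMonoidHom.snd G ℤ).ker)).symm

lemma eq_zmultiples_of_index (S : AddSubgroup ℤ) :
    S = zmultiples ((S.index : ℤ)) := by
  obtain ⟨a, ha⟩ := Int.subgroup_cyclic S
  have hz : S = zmultiples a := by rw [ha, zmultiples_eq_closure]
  have hi : S.index = a.natAbs := by rw [hz, Int.index_zmultiples]
  rw [hz, Int.index_zmultiples]
  ext x
  simp only [Int.mem_zmultiples_iff, Int.natAbs_dvd]


/-- The subgroup of `G × ℤ` built from `K`, a shift `w`, and a step `d`. -/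
def Hof (K : AddSubgroup G) (w : G) (d : ℤ) : AddSubgroup (G × ℤ) :=
  (K.map (AddMonoidHom.inl G ℤ)) ⊔ zmultiples (w, d)

lemma mem_Hof {K : AddSubgroup G} {w : G} {d : ℤ} {g : G} {k : ℤ} :
    (g, k) ∈ Hof K w d ↔ ∃ t : ℤ, k = t * d ∧ g - t • w ∈ K := by
  rw [Hof, AddSubgroup.mem_sup]
  constructor
  · rintro ⟨y, hy, z, hz, hyz⟩
    obtain ⟨y₁, hy₁, rfl⟩ := hy
    obtain ⟨t, rfl⟩ := hz
    refine ⟨t, ?_, ?_⟩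
    · have := congrArg Prod.snd hyz
      simpa [zsmul_eq_mul, mul_comm] using this.symm
    · have := congrArg Prod.fst hyz
      simp only [Prod.fst_add, Prod.smul_fst] at this
      have hg : g = y₁ + t • w := by
        rw [← this]; simp [AddMonoidHom.inl]
      rw [hg]; simpa using hy₁
  · rintro ⟨t, rfl, hgw⟩
    refine ⟨(g - t • w, 0), ⟨g - t • w, hgw, rfl⟩, t • (w, d), ⟨t, rfl⟩, ?_⟩
    simp [Prod.ext_iff, mul_comm, zsmul_eq_mul]

lemma map_snd_Hof (K : AddSubgroup G) (w : G) (d : ℤ) :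
    (Hof K w d).map (AddMonoidHom.snd G ℤ) = zmultiples d := by
  ext k
  simp only [AddSubgroup.mem_map, Int.mem_zmultiples_iff]
  constructor
  · rintro ⟨⟨g, k'⟩, hm, rfl⟩
    obtain ⟨t, rfl, -⟩ := mem_Hof.mp hm
    exact ⟨t, by simp [mul_comm]⟩
  · rintro ⟨t, rfl⟩
    exact ⟨(t • w, d * t), mem_Hof.mpr ⟨t, by ring, by simpa using K.zero_mem⟩, rfl⟩

lemma comap_inl_Hof (K : AddSubgroup G) (w : G) {d : ℤ} (hd : d ≠ 0) :
    (Hof K w d).comap (AddMonoidHom.inl G ℤ) = K := by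
  ext g
  simp only [AddSubgroup.mem_comap]
  constructor
  · intro h
    obtain ⟨t, ht, hgw⟩ := mem_Hof.mp h
    have ht0 : t = 0 := by
      rcases mul_eq_zero.mp ht.symm with h | h
      · exact h
      · exact absurd h hd
    simpa [ht0] using hgw
  · intro h
    exact mem_Hof.mpr ⟨0, by simp, by simpa using h⟩

lemma Hof_congr {K : AddSubgroup G} {w w' : G} (d : ℤ) (h : w - w' ∈ K) :
    Hof K w d = Hof K w' d := by
  ext ⟨g, k⟩
  simp only [mem_Hof]
  constructor
  · rintro ⟨t, rfl, hg⟩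
    refine ⟨t, rfl, ?_⟩
    have := K.add_mem hg (K.zsmul_mem h t)
    simpa [smul_sub, sub_add] using this
  · rintro ⟨t, rfl, hg⟩
    refine ⟨t, rfl, ?_⟩
    have := K.add_mem hg (K.zsmul_mem (K.neg_mem h) t)
    rw [smul_neg, smul_sub] at this
    simpa [sub_add, smul_sub] using this


/-- The reduction map `ℤⁿ → (ℤ/m)ⁿ`. -/
def redHom (n m : ℕ) : (Fin n → ℤ) →+ (Fin n → ZMod m) where
  toFun v := fun i => (v i : ZMod m)
  map_zero' := by funext i; simp
  map_add' a b := by funext i; push_cast; simp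

lemma finite_index_subgroups (n m : ℕ) (hm : m ≠ 0) :
    Finite {H : AddSubgroup (Fin n → ℤ) // H.index = m} := by
  have : Finite (AddSubgroup (Fin n → ZMod m)) := by
    haveI : NeZero m := ⟨hm⟩
    exact Finite.of_injective (fun H => (H : Set (Fin n → ZMod m))) SetLike.coe_injective
  refine Finite.of_injective
    (fun H => (H : {H : AddSubgroup (Fin n → ℤ) // H.index = m}).1.map (redHom n m)) ?_
  rintro ⟨H, hH⟩ ⟨H', hH'⟩ h
  have key : ∀ (S : AddSubgroup (Fin n → ℤ)), S.index = m →
      AddSubgroup.comap (redHom n m) (AddSubgroup.map (redHom n m) S) = S := by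
    intro S hS
    rw [AddSubgroup.comap_map_eq]
    have hker : (redHom n m).ker ≤ S := by
      intro v hv
      have hv' : ∀ i, (m : ℤ) ∣ v i := by
        intro i
        have : (v i : ZMod m) = 0 := congrFun hv i
        exact (ZMod.intCast_zmod_eq_zero_iff_dvd _ m).mp this
      have hveq : v = m • fun i => v i / (m : ℤ) := by
        funext i
        simp only [Pi.smul_apply, nsmul_eq_mul]
        exact (Int.mul_ediv_cancel' (hv' i)).symm
      rw [hveq, ← hS]
      exact S.nsmul_index_mem _
    exact sup_of_le_left hker
  have := congrArg (AddSubgroup.comap (redHom n m)) h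
  simp only at this
  rw [key H hH, key H' hH'] at this
  exact Subtype.ext this


lemma exists_w (H : AddSubgroup (G × ℤ)) :
    ∃ w : G, (w, ((H.map (AddMonoidHom.snd G ℤ)).index : ℤ)) ∈ H := by
  have h1 : (((H.map (AddMonoidHom.snd G ℤ)).index : ℤ)) ∈ H.map (AddMonoidHom.snd G ℤ) := by
    have := mem_zmultiples (((H.map (AddMonoidHom.snd G ℤ)).index : ℤ))
    rwa [← eq_zmultiples_of_index] at this
  obtain ⟨x, hx, hx2⟩ := h1
  refine ⟨x.1, ?_⟩
  have : (x.1, ((H.map (AddMonoidHom.snd G ℤ)).index : ℤ)) = x := by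
    rw [Prod.ext_iff]; exact ⟨rfl, hx2.symm⟩
  rwa [this]

section MainEquiv
variable (m : ℕ)

/-- the parameter space -/
abbrev ParamSp (G : Type*) [AddCommGroup G] (m : ℕ) :=
  Σ _e : {e : ℕ // e ∈ m.divisors},
    Σ K : {K : AddSubgroup G // K.index = _e.1}, G ⧸ K.1

noncomputable def fwd (hm : m ≠ 0) (H : {H : AddSubgroup (G × ℤ) // H.index = m}) :
    ParamSp G m :=
  ⟨⟨(H.1.comap (AddMonoidHom.inl G ℤ)).index, by
      rw [Nat.mem_divisors]
      refine ⟨⟨(H.1.map (AddMonoidHom.snd G ℤ)).index, ?_⟩, hm⟩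
      have h := index_eq_mul_aux H.1
      rw [H.2] at h
      exact h.trans (mul_comm _ _)⟩,
   ⟨H.1.comap (AddMonoidHom.inl G ℤ), rfl⟩,
   QuotientAddGroup.mk (Classical.choose (exists_w H.1))⟩

lemma div_ne_zero_of_mem_divisors {e : ℕ} (he : e ∈ m.divisors) : m / e ≠ 0 := by
  obtain ⟨hdvd, hm⟩ := Nat.mem_divisors.mp he
  have he0 : e ≠ 0 := fun h => hm (by simpa [h] using hdvd)
  exact fun h => hm (by rw [← Nat.div_mul_cancel hdvd, h, zero_mul])

noncomputable def bwd (hm : m ≠ 0) (y : ParamSp G m) :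
    {H : AddSubgroup (G × ℤ) // H.index = m} :=
  ⟨Hof y.2.1.1 y.2.2.out ((m / y.1.1 : ℕ) : ℤ), by
    have hd0 : ((m / y.1.1 : ℕ) : ℤ) ≠ 0 :=
      Int.natCast_ne_zero.mpr (div_ne_zero_of_mem_divisors m y.1.2)
    rw [index_eq_mul_aux, map_snd_Hof, comap_inl_Hof _ _ hd0, Int.index_zmultiples,
      Int.natAbs_natCast, y.2.1.2, Nat.div_mul_cancel (Nat.mem_divisors.mp y.1.2).1]⟩

lemma sub_mem_of_mk_eq {K : AddSubgroup G} {a b : G} (h : QuotientAddGroup.mk a = (QuotientAddGroup.mk b : G ⧸ K)) :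
    a - b ∈ K := by
  have h' : -a + b ∈ K := (QuotientAddGroup.eq).mp h
  have := K.neg_mem h'
  simpa [neg_add_rev, sub_eq_add_neg, add_comm] using this

lemma bwd_fwd (hm : m ≠ 0) (H : {H : AddSubgroup (G × ℤ) // H.index = m}) :
    bwd m hm (fwd m hm H) = H := by
  obtain ⟨H, hH⟩ := H
  apply Subtype.ext
  dsimp [bwd, fwd]
  set d := (H.map (AddMonoidHom.snd G ℤ)).index with hd
  set K := H.comap (AddMonoidHom.inl G ℤ) with hKdef
  set w := Classical.choose (exists_w H) with hw
  have hwmem : (w, (d : ℤ)) ∈ H := Classical.choose_spec (exists_w H)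
  have hme : d * K.index = m := by rw [← hH, index_eq_mul_aux H]
  have hK0 : K.index ≠ 0 := fun h => hm (by rw [h, mul_zero] at hme; exact hme.symm)
  have hdiv : m / K.index = d :=
    Nat.div_eq_of_eq_mul_left (Nat.pos_of_ne_zero hK0) hme.symm
  rw [← Int.natCast_div, hdiv]
  have hcongr : Hof K (QuotientAddGroup.mk (s := K) w).out ((d : ℕ) : ℤ) = Hof K w (d : ℤ) :=
    Hof_congr _ (sub_mem_of_mk_eq ((QuotientAddGroup.out_eq' _)))
  refine Eq.trans hcongr ?_
  -- now show Hof K w d = H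
  have hd0 : d ≠ 0 := fun h => hm (by rw [← hme, h, zero_mul])
  apply le_antisymm
  · rw [Hof, sup_le_iff]
    constructor
    · rw [AddSubgroup.map_le_iff_le_comap]
    · rw [AddSubgroup.zmultiples_le]
      exact hwmem
  · rintro ⟨g, k⟩ hgk
    have hk : k ∈ H.map (AddMonoidHom.snd G ℤ) := ⟨(g, k), hgk, rfl⟩
    have hmapeq : H.map (AddMonoidHom.snd G ℤ) = zmultiples ((d : ℕ) : ℤ) := by
      rw [hd]; exact eq_zmultiples_of_index _
    rw [hmapeq, Int.mem_zmultiples_iff] at hk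
    obtain ⟨t, ht⟩ := hk
    refine mem_Hof.mpr ⟨t, by rw [ht, mul_comm], ?_⟩
    have hsub : (g, k) - t • (w, (d : ℤ)) ∈ H := H.sub_mem hgk (H.zsmul_mem hwmem t)
    have h2 : ((g - t • w : G), k - t * (d : ℤ)) ∈ H := by simpa using hsub
    rw [show k - t * (d : ℤ) = 0 from by rw [ht]; ring] at h2
    exact h2

lemma paramSp_ext {e e' : {e : ℕ // e ∈ m.divisors}}
    {K : {K : AddSubgroup G // K.index = e.1}} {K' : {K : AddSubgroup G // K.index = e'.1}}
    {x : G ⧸ K.1} {x' : G ⧸ K'.1}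
    (h0 : e.1 = e'.1) (h1 : K.1 = K'.1) (a : G)
    (ha : QuotientAddGroup.mk a = x) (ha' : QuotientAddGroup.mk a = x') :
    (⟨e, K, x⟩ : ParamSp G m) = ⟨e', K', x'⟩ := by
  obtain ⟨e, he⟩ := e
  obtain ⟨e', he'⟩ := e'
  dsimp at h0
  subst h0
  obtain ⟨K, hK⟩ := K
  obtain ⟨K', hK'⟩ := K'
  dsimp at h1
  subst h1
  subst ha
  subst ha'
  rfl

lemma fwd_bwd (hm : m ≠ 0) (y : ParamSp G m) : fwd m hm (bwd m hm y) = y := by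
  obtain ⟨⟨e, he⟩, ⟨⟨K, hK⟩, x⟩⟩ := y
  have hd0 : ((m / e : ℕ) : ℤ) ≠ 0 :=
    Int.natCast_ne_zero.mpr (div_ne_zero_of_mem_divisors m he)
  have hcomap : (Hof K (Quotient.out x) ((m / e : ℕ) : ℤ)).comap (AddMonoidHom.inl G ℤ) = K :=
    comap_inl_Hof _ _ hd0
  have hsnd : (Hof K (Quotient.out x) ((m / e : ℕ) : ℤ)).map (AddMonoidHom.snd G ℤ)
      = zmultiples ((m / e : ℕ) : ℤ) := map_snd_Hof _ _ _
  have hindsnd : ((Hof K (Quotient.out x) ((m / e : ℕ) : ℤ)).map (AddMonoidHom.snd G ℤ)).index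
      = m / e := by
    rw [hsnd, Int.index_zmultiples, Int.natAbs_natCast]
  have hspec := Classical.choose_spec (exists_w (Hof K (Quotient.out x) ((m / e : ℕ) : ℤ)))
  obtain ⟨t, ht, hwk⟩ := mem_Hof.mp hspec
  rw [hindsnd] at ht
  have ht1 : t = 1 := by
    have h1 : (1 : ℤ) * ((m / e : ℕ) : ℤ) = t * ((m / e : ℕ) : ℤ) := by rw [one_mul, ← ht]
    exact (mul_right_cancel₀ hd0 h1.symm)
  rw [ht1, one_smul] at hwk
  dsimp only [fwd, bwd]
  refine paramSp_ext m ?_ ?_ (Classical.choose (exists_w (Hof K (Quotient.out x) ((m / e : ℕ) : ℤ)))) rfl ?_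
  · dsimp only; rw [hcomap, hK]
  · dsimp only; rw [hcomap]
  · have : QuotientAddGroup.mk (Quotient.out x) = x := QuotientAddGroup.out_eq' x
    rw [← this]
    exact (QuotientAddGroup.eq).mpr (by
      have := K.neg_mem hwk
      simpa [neg_sub, sub_eq_add_neg, add_comm] using this)

noncomputable def mainEquiv (hm : m ≠ 0) :
    {H : AddSubgroup (G × ℤ) // H.index = m} ≃ ParamSp G m where
  toFun := fwd m hm
  invFun := bwd m hm
  left_inv := bwd_fwd m hm
  right_inv := fwd_bwd m hm


end MainEquiv

lemma nat_card_sigma {ι : Type*} [Fintype ι] (f : ι → Type*) [∀ i, Finite (f i)] :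
    Nat.card (Σ i, f i) = ∑ i, Nat.card (f i) := by
  haveI : ∀ i, Fintype (f i) := fun i => Fintype.ofFinite _
  simp [Nat.card_eq_fintype_card, Fintype.card_sigma]

lemma card_step (n m : ℕ) (hm : m ≠ 0) :
    Nat.card {H : AddSubgroup ((Fin n → ℤ) × ℤ) // H.index = m}
      = ∑ e ∈ m.divisors, Nat.card {K : AddSubgroup (Fin n → ℤ) // K.index = e} * e := by
  rw [Nat.card_congr (mainEquiv m hm)]
  haveI hfin : ∀ e : {e : ℕ // e ∈ m.divisors},
      Finite {K : AddSubgroup (Fin n → ℤ) // K.index = e.1} := fun e =>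
    finite_index_subgroups n e.1 (Nat.pos_of_mem_divisors e.2).ne'
  haveI hfinq : ∀ (e : {e : ℕ // e ∈ m.divisors})
      (K : {K : AddSubgroup (Fin n → ℤ) // K.index = e.1}), Finite ((Fin n → ℤ) ⧸ K.1) := by
    intro e K
    apply Nat.finite_of_card_ne_zero
    rw [← AddSubgroup.index_eq_card, K.2]
    exact (Nat.pos_of_mem_divisors e.2).ne'
  haveI : ∀ e : {e : ℕ // e ∈ m.divisors},
      Finite (Σ K : {K : AddSubgroup (Fin n → ℤ) // K.index = e.1}, (Fin n → ℤ) ⧸ K.1) := by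
    intro e
    haveI := hfin e
    haveI := hfinq e
    infer_instance
  rw [nat_card_sigma]
  rw [← Finset.sum_coe_sort m.divisors
    (fun e => Nat.card {K : AddSubgroup (Fin n → ℤ) // K.index = e} * e)]
  apply Finset.sum_congr rfl
  intro e _
  haveI := hfin e
  haveI : Fintype {K : AddSubgroup (Fin n → ℤ) // K.index = e.1} := Fintype.ofFinite _
  rw [nat_card_sigma]
  have : ∀ K : {K : AddSubgroup (Fin n → ℤ) // K.index = e.1},
      Nat.card ((Fin n → ℤ) ⧸ K.1) = e.1 := by
    intro K
    rw [← AddSubgroup.index_eq_card, K.2]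
  rw [Finset.sum_congr rfl (fun K _ => this K)]
  rw [Finset.sum_const, Finset.card_univ, smul_eq_mul]
  simp [← Nat.card_eq_fintype_card]


end GroupTheory




/-- `subCount n m` is the number of sublattices (subgroups) of `ℤⁿ` of index `m`. -/
noncomputable def subCount (n m : ℕ) : ℕ :=
  Nat.card {H : AddSubgroup (Fin n → ℤ) // H.index = m}



/-- splitting off the 0th coordinate -/
def splitE (n : ℕ) : (Fin (n + 1) → ℤ) ≃+ (Fin n → ℤ) × ℤ where
  toFun f := (fun i => f i.succ, f 0)
  invFun p := Fin.cons p.2 p.1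
  left_inv f := Fin.cons_self_tail f
  right_inv p := by
    refine Prod.ext ?_ ?_
    · funext i; simp
    · simp
  map_add' a b := rfl

/-- transfer of subgroup counting along an additive equivalence -/
def subgroupSubtypeEquiv {A B : Type*} [AddCommGroup A] [AddCommGroup B] (E : A ≃+ B) (m : ℕ) :
    {H : AddSubgroup A // H.index = m} ≃ {H : AddSubgroup B // H.index = m} where
  toFun H := ⟨H.1.comap E.symm.toAddMonoidHom, by
    rw [AddSubgroup.index_comap_of_surjective _ E.symm.surjective, H.2]⟩
  invFun H := ⟨H.1.comap E.toAddMonoidHom, by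
    rw [AddSubgroup.index_comap_of_surjective _ E.surjective, H.2]⟩
  left_inv H := by
    apply Subtype.ext
    ext x
    simp [AddSubgroup.mem_comap]
  right_inv H := by
    apply Subtype.ext
    ext x
    simp [AddSubgroup.mem_comap]

lemma subCount_succ (n m : ℕ) :
    subCount (n + 1) m = Nat.card {H : AddSubgroup ((Fin n → ℤ) × ℤ) // H.index = m} :=
  Nat.card_congr (subgroupSubtypeEquiv (splitE n) m)

lemma subCount_zero (m : ℕ) : subCount 0 m = if m = 1 then 1 else 0 := by
  have hsub : Subsingleton (Fin 0 → ℤ) := ⟨fun a b => funext fun i => i.elim0⟩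
  have hidx : ∀ H : AddSubgroup (Fin 0 → ℤ), H.index = 1 := by
    intro H
    rw [AddSubgroup.index_eq_card]
    haveI : Subsingleton ((Fin 0 → ℤ) ⧸ H) := Quotient.instSubsingletonQuotient _
    exact Nat.card_eq_one_iff_unique.mpr ⟨inferInstance, ⟨0⟩⟩
  split_ifs with h
  · subst h
    have : Unique {H : AddSubgroup (Fin 0 → ℤ) // H.index = 1} := by
      refine ⟨⟨⟨⊤, hidx ⊤⟩⟩, ?_⟩
      rintro ⟨H, hH⟩
      apply Subtype.ext
      apply AddSubgroup.ext
      intro x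
      haveI := hsub
      simp only [AddSubgroup.mem_top, iff_true]
      rw [show x = 0 from Subsingleton.elim x 0]
      exact H.zero_mem
    exact Nat.card_eq_one_iff_unique.mpr ⟨inferInstance, inferInstance⟩
  · have : IsEmpty {H : AddSubgroup (Fin 0 → ℤ) // H.index = m} :=
      ⟨fun H => h (H.2 ▸ hidx H.1)⟩
    exact Nat.card_of_isEmpty


lemma sum_peel (n m : ℕ) (hm : 1 ≤ m) (F : (Fin (n + 1) → ℕ) → ℕ) :
    ∑ d ∈ (Fintype.piFinset fun _ : Fin (n + 1) => Finset.Icc 1 m) |>.filter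
        (fun d => ∏ i, d i = m), F d
      = ∑ e ∈ m.divisors,
          ∑ c ∈ (Fintype.piFinset fun _ : Fin n => Finset.Icc 1 e) |>.filter
            (fun c => ∏ i, c i = e), F (Fin.cons (m / e) c) := by
  rw [Finset.sum_sigma' m.divisors _ (fun e c => F (Fin.cons (m / e) c))]
  refine Finset.sum_nbij' (fun d => ⟨∏ i : Fin n, d i.succ, Fin.tail d⟩)
    (fun p => Fin.cons (m / p.1) p.2) ?_ ?_ ?_ ?_ ?_
  · intro d hd
    obtain ⟨hdmem, hdprod⟩ := Finset.mem_filter.mp hd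
    rw [Fintype.mem_piFinset] at hdmem
    have h1 : ∀ i : Fin (n + 1), 1 ≤ d i := fun i => (Finset.mem_Icc.mp (hdmem i)).1
    have hsplit : d 0 * ∏ i : Fin n, d i.succ = m := by
      rw [← hdprod, Fin.prod_univ_succ]
    have hpos : 0 < ∏ i : Fin n, d i.succ := Finset.prod_pos (fun i _ => h1 i.succ)
    rw [Finset.mem_sigma]
    constructor
    · rw [Nat.mem_divisors]
      exact ⟨⟨d 0, by rw [← hsplit, mul_comm]⟩, by omega⟩
    · rw [Finset.mem_filter]
      constructor
      · rw [Fintype.mem_piFinset]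
        intro i
        rw [Finset.mem_Icc]
        refine ⟨h1 i.succ, ?_⟩
        exact Nat.le_of_dvd hpos (Finset.dvd_prod_of_mem (fun j => d j.succ) (Finset.mem_univ i))
      · rfl
  · rintro ⟨e, c⟩ hp
    rw [Finset.mem_sigma] at hp
    obtain ⟨he, hc⟩ := hp
    obtain ⟨hdvd, hm0⟩ := Nat.mem_divisors.mp he
    obtain ⟨hcmem, hcprod⟩ := Finset.mem_filter.mp hc
    dsimp only at hcmem hcprod
    rw [Fintype.mem_piFinset] at hcmem
    have hepos : 0 < e := Nat.pos_of_mem_divisors he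
    have hele : e ≤ m := Nat.le_of_dvd (by omega) hdvd
    rw [Finset.mem_filter]
    constructor
    · rw [Fintype.mem_piFinset]
      intro i
      refine Fin.cases ?_ ?_ i
      · dsimp only; rw [Fin.cons_zero, Finset.mem_Icc]
        exact ⟨(Nat.one_le_div_iff hepos).mpr hele, Nat.div_le_self _ _⟩
      · intro j
        dsimp only
        rw [Fin.cons_succ]
        have := Finset.mem_Icc.mp (hcmem j)
        exact Finset.mem_Icc.mpr ⟨this.1, le_trans this.2 hele⟩
    · dsimp only
      rw [Fin.prod_univ_succ, Fin.cons_zero]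
      have : (∏ i : Fin n, (Fin.cons (m / e) c : Fin (n + 1) → ℕ) i.succ) = e := by
        rw [← hcprod]
        exact Finset.prod_congr rfl (fun i _ => by rw [Fin.cons_succ])
      rw [this, Nat.div_mul_cancel hdvd]
  · intro d hd
    obtain ⟨hdmem, hdprod⟩ := Finset.mem_filter.mp hd
    rw [Fintype.mem_piFinset] at hdmem
    have h1 : ∀ i : Fin (n + 1), 1 ≤ d i := fun i => (Finset.mem_Icc.mp (hdmem i)).1
    have hpos : 0 < ∏ i : Fin n, d i.succ := Finset.prod_pos (fun i _ => h1 i.succ)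
    have hsplit : m = d 0 * ∏ i : Fin n, d i.succ := by
      rw [← hdprod, Fin.prod_univ_succ]
    have hd0 : m / (∏ i : Fin n, d i.succ) = d 0 :=
      Nat.div_eq_of_eq_mul_left hpos hsplit
    dsimp only
    rw [hd0]
    exact Fin.cons_self_tail d
  · rintro ⟨e, c⟩ hp
    rw [Finset.mem_sigma] at hp
    obtain ⟨he, hc⟩ := hp
    obtain ⟨-, hcprod⟩ := Finset.mem_filter.mp hc
    dsimp only at hcprod
    refine Sigma.ext ?_ (heq_of_eq ?_)
    · dsimp only
      rw [← hcprod]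
      exact Finset.prod_congr rfl (fun i _ => by rw [Fin.cons_succ])
    · dsimp only
      exact Fin.tail_cons _ _
  · intro d hd
    obtain ⟨hdmem, hdprod⟩ := Finset.mem_filter.mp hd
    rw [Fintype.mem_piFinset] at hdmem
    have h1 : ∀ i : Fin (n + 1), 1 ≤ d i := fun i => (Finset.mem_Icc.mp (hdmem i)).1
    have hpos : 0 < ∏ i : Fin n, d i.succ := Finset.prod_pos (fun i _ => h1 i.succ)
    have hsplit : m = d 0 * ∏ i : Fin n, d i.succ := by
      rw [← hdprod, Fin.prod_univ_succ]
    have hd0 : m / (∏ i : Fin n, d i.succ) = d 0 :=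
      Nat.div_eq_of_eq_mul_left hpos hsplit
    dsimp only
    rw [hd0, Fin.cons_self_tail]


/-- Baake's formula: the number of sublattices of `ℤⁿ` of index `m` equals
`∑ d₁⁰d₂¹⋯d_n^{n-1}` over ordered factorizations `m = d₁d₂⋯d_n` into positive integers. -/
theorem subCount_eq_sum_factorizations (n m : ℕ) (hm : 1 ≤ m) :
    subCount n m =
      ∑ d ∈ (Fintype.piFinset fun _ : Fin n => Finset.Icc 1 m) |>.filter
          (fun d => ∏ i, d i = m),
        ∏ i : Fin n, d i ^ (i : ℕ) := by
  induction n generalizing m with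
  | zero =>
    rw [subCount_zero]
    have hpi : (Fintype.piFinset fun _ : Fin 0 => Finset.Icc 1 m) = Finset.univ := by
      ext f
      simp only [Fintype.mem_piFinset, Finset.mem_univ, iff_true]
      exact fun i => i.elim0
    rw [hpi]
    have hprod : ∀ d : Fin 0 → ℕ, (∏ i, d i) = 1 := fun d => by simp
    by_cases h : m = 1
    · subst h
      rw [if_pos rfl]
      rw [Finset.filter_true_of_mem (fun d _ => hprod d)]
      have : ∀ d : Fin 0 → ℕ, (∏ i : Fin 0, d i ^ (i : ℕ)) = 1 := fun d => by simp
      rw [Finset.sum_congr rfl (fun d _ => this d), Finset.sum_const, smul_eq_mul, mul_one,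
        Finset.card_univ]
      simp [Fintype.card_eq_one_iff]
    · rw [if_neg h]
      have : ∀ d : Fin 0 → ℕ, ¬(∏ i, d i = m) := fun d hh => h ((hprod d) ▸ hh).symm
      rw [Finset.filter_false_of_mem (fun d _ => this d), Finset.sum_empty]
  | succ n ih =>
    rw [subCount_succ, card_step n m (by omega)]
    rw [sum_peel n m hm (fun d => ∏ i, d i ^ (i : ℕ))]
    apply Finset.sum_congr rfl
    intro e he
    have he1 : 1 ≤ e := Nat.pos_of_mem_divisors he
    trans (∑ c ∈ (Fintype.piFinset fun _ : Fin n => Finset.Icc 1 e) |>.filter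
        (fun c => ∏ i, c i = e), (∏ i : Fin n, c i ^ (i : ℕ)) * e)
    · rw [← Finset.sum_mul]
      exact congrArg (· * e) (ih e he1)
    · refine Finset.sum_congr rfl (fun c hc => ?_)
      obtain ⟨-, hcprod⟩ := Finset.mem_filter.mp hc
      symm
      show (∏ i : Fin (n + 1), (Fin.cons (m / e) c : Fin (n + 1) → ℕ) i ^ (i : ℕ))
        = (∏ i : Fin n, c i ^ (i : ℕ)) * e
      rw [Fin.prod_univ_succ]
      have h0 : (Fin.cons (m / e) c : Fin (n + 1) → ℕ) 0 ^ ((0 : Fin (n + 1)) : ℕ) = 1 := by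
        simp
      rw [h0, one_mul]
      have hterm : ∀ i : Fin n,
          (Fin.cons (m / e) c : Fin (n + 1) → ℕ) i.succ ^ ((i.succ : Fin (n + 1)) : ℕ)
            = c i ^ (i : ℕ) * c i := by
        intro i
        rw [Fin.cons_succ, Fin.val_succ, pow_succ]
      rw [Finset.prod_congr rfl (fun i _ => hterm i), Finset.prod_mul_distrib, hcprod]
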